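/- Let (a_1, ..., a_m) be a telescopic sequence of positive integers (so gcd(a_1,...,a_m) = 1) and let S_m be the numerical semigroup it generates. If S_m ≠ ℕ, then the largest gap of S_m satisfies l_g(S_m) = Σ_{i=1}^{m} (d_{i-1}/d_i - 1) a_i, where d_i = gcd(a_1, ..., a_i) for i ≥ 1, d_0 = 0, and the i = 1 term of the sum equals -a_1. -/

import Mathlib

/-- `seqGcd a i = d_i = gcd(a_1, …, a_i)` (so `seqGcd a 0 = 0`). -/
def seqGcd (a : ℕ → ℕ) (i : ℕ) : ℕ := Finset.gcd (Finset.Icc 1 i) a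

/-- `seqSemigroup a i = S_i`, the submonoid of `ℕ` generated by `{a_1/d_i, …, a_i/d_i}`. -/
def seqSemigroup (a : ℕ → ℕ) (i : ℕ) : AddSubmonoid ℕ :=
  AddSubmonoid.closure ((fun j => a j / seqGcd a i) '' Set.Icc 1 i)

lemma seqGcd_zero (a : ℕ → ℕ) : seqGcd a 0 = 0 := by simp [seqGcd]

lemma seqGcd_succ (a : ℕ → ℕ) (i : ℕ) :
    seqGcd a (i + 1) = Nat.gcd (a (i + 1)) (seqGcd a i) := by
  have h : Finset.Icc 1 (i + 1) = insert (i + 1) (Finset.Icc 1 i) := by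
    ext x; simp [Finset.mem_Icc]; omega
  rw [seqGcd, h, Finset.gcd_insert]
  rfl

lemma seqGcd_dvd (a : ℕ → ℕ) {i j : ℕ} (h1 : 1 ≤ j) (h2 : j ≤ i) : seqGcd a i ∣ a j :=
  Finset.gcd_dvd (by simp [Finset.mem_Icc]; omega)

lemma seqGcd_pos (a : ℕ → ℕ) {i : ℕ} (h1 : 1 ≤ i) (ha : 0 < a 1) : 0 < seqGcd a i := by
  rcases Nat.eq_zero_or_pos (seqGcd a i) with h | h
  · exact absurd (Finset.gcd_eq_zero_iff.1 h 1 (by simp [Finset.mem_Icc]; omega)) (by omega)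
  · exact h

lemma seqGcd_mul (a : ℕ → ℕ) (d : ℕ) {i : ℕ} (h : ∀ j, 1 ≤ j → j ≤ i → d ∣ a j) :
    seqGcd a i = d * seqGcd (fun j => a j / d) i := by
  have h1 : (Finset.Icc 1 i).gcd (fun j => d * (a j / d)) =
      normalize d * (Finset.Icc 1 i).gcd (fun j => a j / d) := Finset.gcd_mul_left
  have h2 : (Finset.Icc 1 i).gcd (fun j => d * (a j / d)) = (Finset.Icc 1 i).gcd a := by
    refine Finset.gcd_congr rfl fun j hj => ?_
    simp only [Finset.mem_Icc] at hj
    exact Nat.mul_div_cancel' (h j hj.1 hj.2)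
  rw [normalize_eq] at h1
  rw [seqGcd, seqGcd, ← h2, h1]

/-- The candidate Frobenius number, as an integer. -/
def seqF (a : ℕ → ℕ) (m : ℕ) : ℤ :=
  ∑ i ∈ Finset.Icc 1 m, ((seqGcd a (i - 1) : ℤ) / (seqGcd a i : ℤ) - 1) * (a i : ℤ)

lemma seqF_key (m : ℕ) (hm : 1 ≤ m) : ∀ a : ℕ → ℕ,
    (∀ i, 1 ≤ i → i ≤ m → 0 < a i) →
    seqGcd a m = 1 →
    (∀ i, 2 ≤ i → i ≤ m → a i / seqGcd a i ∈ seqSemigroup a (i - 1)) →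
    (-1 ≤ seqF a m) ∧ (∀ n : ℕ, seqF a m < (n : ℤ) → n ∈ seqSemigroup a m) ∧
      (∀ n : ℕ, (n : ℤ) = seqF a m → n ∉ seqSemigroup a m) := by
  induction m, hm using Nat.le_induction with
  | base =>
    intro a hpos hgcd htel
    have ha1 : seqGcd a 1 = a 1 := by
      rw [seqGcd_succ a 0, seqGcd_zero, Nat.gcd_zero_right]
    rw [ha1] at hgcd
    have hmem : ∀ n : ℕ, n ∈ seqSemigroup a 1 := by
      intro n
      have h1 : (1 : ℕ) ∈ seqSemigroup a 1 := by
        apply AddSubmonoid.subset_closure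
        exact ⟨1, by simp, by simp [ha1, hgcd]⟩
      simpa [nsmul_eq_mul] using AddSubmonoid.nsmul_mem _ h1 n
    have hF : seqF a 1 = -1 := by
      rw [seqF, Finset.Icc_self, Finset.sum_singleton, seqGcd_zero, ha1, hgcd]
      norm_num
    rw [hF]
    refine ⟨le_refl _, fun n _ => hmem n, fun n hn => ?_⟩
    exfalso; omega
  | succ m hm IH =>
    intro a hpos hgcd htel
    have ha1 : 0 < a 1 := hpos 1 le_rfl (by omega)
    set d := seqGcd a m with hd_def
    set A := a (m + 1) with hA_def
    have hd : 0 < d := seqGcd_pos a hm ha1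
    have hApos : 0 < A := hpos (m + 1) (by omega) le_rfl
    have hdvd : ∀ j, 1 ≤ j → j ≤ m → d ∣ a j := fun j h1 h2 => seqGcd_dvd a h1 h2
    set b : ℕ → ℕ := fun j => a j / d with hb_def
    have hab : ∀ j, 1 ≤ j → j ≤ m → a j = d * b j := fun j h1 h2 =>
      (Nat.mul_div_cancel' (hdvd j h1 h2)).symm
    have hcop : Nat.Coprime A d := by
      rw [seqGcd_succ] at hgcd; exact hgcd
    have hgcdb : ∀ i, i ≤ m → seqGcd a i = d * seqGcd b i := fun i hi =>
      seqGcd_mul a d (fun j h1 h2 => hdvd j h1 (le_trans h2 hi))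
    have hbm : seqGcd b m = 1 := by
      have h := hgcdb m le_rfl
      have : d * seqGcd b m = d * 1 := by rw [mul_one, ← h]
      exact Nat.eq_of_mul_eq_mul_left hd this
    have hbdiv : ∀ j i, 1 ≤ j → i ≤ m → b j / seqGcd b i = a j / seqGcd a i := by
      intro j i h1 h3
      have hgi : seqGcd a i = d * seqGcd b i := hgcdb i h3
      show a j / d / seqGcd b i = a j / seqGcd a i
      rw [Nat.div_div_eq_div_mul, ← hgi]
    have hSeq : ∀ i, i ≤ m → seqSemigroup b i = seqSemigroup a i := by
      intro i h2
      unfold seqSemigroup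
      congr 1
      exact Set.image_congr fun j hj => hbdiv j i hj.1 h2
    have hposb : ∀ i, 1 ≤ i → i ≤ m → 0 < b i := fun i h1 h2 =>
      Nat.div_pos (Nat.le_of_dvd (hpos i h1 (by omega)) (hdvd i h1 h2)) hd
    have htelb : ∀ i, 2 ≤ i → i ≤ m → b i / seqGcd b i ∈ seqSemigroup b (i - 1) := by
      intro i h1 h2
      rw [hbdiv i i (by omega) h2, hSeq (i - 1) (by omega)]
      exact htel i h1 (by omega)
    obtain ⟨hF1, hF2, hF3⟩ := IH b hposb hbm htelb
    set F' := seqF b m with hF'_def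
    -- A is in S_{m} = seqSemigroup b m, by the telescopic condition
    have hAmem : A ∈ seqSemigroup b m := by
      rw [hSeq m le_rfl]
      have h := htel (m + 1) (by omega) le_rfl
      simpa [hgcd] using h
    -- generators of seqSemigroup a (m+1)
    have hSgen : seqSemigroup a (m + 1) =
        AddSubmonoid.closure ((fun j => a j) '' Set.Icc 1 (m + 1)) := by
      unfold seqSemigroup
      rw [hgcd]
      simp
    have hbgen : ∀ j, 1 ≤ j → j ≤ m → b j ∈ seqSemigroup b m := by
      intro j h1 h2
      apply AddSubmonoid.subset_closure
      exact ⟨j, ⟨h1, h2⟩, by simp [hbm]⟩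
    -- membership characterization
    have hchar : ∀ n : ℕ, n ∈ seqSemigroup a (m + 1) ↔
        ∃ k s : ℕ, s ∈ seqSemigroup b m ∧ n = k * A + d * s := by
      intro n
      constructor
      · intro hn
        rw [hSgen] at hn
        induction hn using AddSubmonoid.closure_induction with
        | mem x hx =>
          obtain ⟨j, hj, rfl⟩ := hx
          simp only [Set.mem_Icc] at hj
          rcases eq_or_lt_of_le hj.2 with hjm | hjm
          · exact ⟨1, 0, zero_mem _, by simp [hA_def, hjm]⟩
          · have hjm' : j ≤ m := by omega
            exact ⟨0, b j, hbgen j hj.1 hjm', by simp [hab j hj.1 hjm']⟩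
        | zero => exact ⟨0, 0, zero_mem _, by simp⟩
        | add x y hx hy ihx ihy =>
          obtain ⟨k1, s1, hs1, rfl⟩ := ihx
          obtain ⟨k2, s2, hs2, rfl⟩ := ihy
          exact ⟨k1 + k2, s1 + s2, add_mem hs1 hs2, by ring⟩
      · rintro ⟨k, s, hs, rfl⟩
        have hA : A ∈ seqSemigroup a (m + 1) := by
          rw [hSgen]
          exact AddSubmonoid.subset_closure ⟨m + 1, ⟨by omega, le_rfl⟩, rfl⟩
        have h1 : k * A ∈ seqSemigroup a (m + 1) := by
          simpa [nsmul_eq_mul] using AddSubmonoid.nsmul_mem _ hA k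
        have h2 : d * s ∈ seqSemigroup a (m + 1) := by
          induction hs using AddSubmonoid.closure_induction with
          | mem x hx =>
            obtain ⟨j, hj, rfl⟩ := hx
            simp only [Set.mem_Icc] at hj
            simp only [hbm, Nat.div_one]
            rw [← hab j hj.1 hj.2, hSgen]
            exact AddSubmonoid.subset_closure ⟨j, ⟨hj.1, by omega⟩, rfl⟩
          | zero => simpa using zero_mem (seqSemigroup a (m + 1))
          | add x y hx hy ihx ihy =>
            rw [mul_add]; exact add_mem ihx ihy
        exact add_mem h1 h2
    -- the sum identity
    have hsum : seqF a (m + 1) = d * F' + ((d : ℤ) - 1) * A := by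
      rw [seqF, Finset.sum_Icc_succ_top (by omega : 1 ≤ m + 1)]
      have hlast : ((seqGcd a (m + 1 - 1) : ℤ) / (seqGcd a (m + 1) : ℤ) - 1) * (a (m + 1) : ℤ)
          = ((d : ℤ) - 1) * A := by
        simp [hgcd, hd_def, hA_def]
      rw [hlast]
      congr 1
      rw [hF'_def, seqF, Finset.mul_sum]
      refine Finset.sum_congr rfl fun i hi => ?_
      simp only [Finset.mem_Icc] at hi
      have e1 : (seqGcd a (i - 1) : ℤ) = (d : ℤ) * (seqGcd b (i - 1) : ℤ) := by
        exact_mod_cast congrArg (Nat.cast (R := ℤ)) (hgcdb (i - 1) (by omega))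
      have e2 : (seqGcd a i : ℤ) = (d : ℤ) * (seqGcd b i : ℤ) := by
        exact_mod_cast congrArg (Nat.cast (R := ℤ)) (hgcdb i hi.2)
      have e3 : (a i : ℤ) = (d : ℤ) * (b i : ℤ) := by
        exact_mod_cast congrArg (Nat.cast (R := ℤ)) (hab i hi.1 hi.2)
      rw [e1, e2, e3, Int.mul_ediv_mul_of_pos _ _ (by exact_mod_cast hd)]
      ring
    have hdZ : (1 : ℤ) ≤ (d : ℤ) := by exact_mod_cast hd
    have hAZ : (1 : ℤ) ≤ (A : ℤ) := by exact_mod_cast hApos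
    refine ⟨?_, ?_, ?_⟩
    · -- -1 ≤ F
      rw [hsum]
      have h1 : (d : ℤ) * (-1) ≤ (d : ℤ) * F' :=
        mul_le_mul_of_nonneg_left hF1 (by linarith)
      have h2 : ((d : ℤ) - 1) * 1 ≤ ((d : ℤ) - 1) * A :=
        mul_le_mul_of_nonneg_left hAZ (by linarith)
      linarith
    · -- every n > F is in the semigroup
      intro n hn
      rw [hsum] at hn
      haveI : NeZero d := ⟨hd.ne'⟩
      set u : ZMod d := (A : ZMod d)⁻¹ with hu_def
      set k := ((n : ZMod d) * u).val with hk_def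
      have hk : k < d := ZMod.val_lt _
      have hAu : (A : ZMod d) * u = 1 := ZMod.coe_mul_inv_eq_one A hcop
      have hdvd2 : (d : ℤ) ∣ (n : ℤ) - (k : ℤ) * (A : ℤ) := by
        rw [← ZMod.intCast_zmod_eq_zero_iff_dvd]
        push_cast
        have hk2 : ((k : ℕ) : ZMod d) = (n : ZMod d) * u := ZMod.natCast_zmod_val _
        rw [hk2]
        calc (n : ZMod d) - (n : ZMod d) * u * (A : ZMod d)
            = (n : ZMod d) - (n : ZMod d) * ((A : ZMod d) * u) := by ring
          _ = 0 := by rw [hAu]; ring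
      obtain ⟨s, hs⟩ := hdvd2
      have hkA : (k : ℤ) * A ≤ ((d : ℤ) - 1) * A := by
        have : (k : ℤ) ≤ (d : ℤ) - 1 := by
          have := hk; omega
        exact mul_le_mul_of_nonneg_right this (by linarith)
      have hsF : F' < s := by
        have h3 : (d : ℤ) * F' < (d : ℤ) * s := by
          rw [← hs]; linarith
        exact lt_of_mul_lt_mul_left h3 (by linarith)
      have hs0 : 0 ≤ s := by linarith
      lift s to ℕ using hs0 with s
      have hsS : s ∈ seqSemigroup b m := hF2 s hsF
      rw [hchar n]
      exact ⟨k, s, hsS, by omega⟩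
    · -- F itself is not in the semigroup
      intro n hn hmem
      rw [hchar n] at hmem
      obtain ⟨k, s, hsS, hns⟩ := hmem
      have hnsZ : (n : ℤ) = (k : ℤ) * A + (d : ℤ) * s := by exact_mod_cast hns
      have heq : (d : ℤ) * F' + ((d : ℤ) - 1) * A = (k : ℤ) * A + (d : ℤ) * s := by
        rw [← hsum, ← hn]; exact hnsZ
      have hdk : (d : ℤ) ∣ ((k : ℤ) + 1) * A :=
        ⟨F' + A - s, by linear_combination -heq⟩
      have hdkn : d ∣ (k + 1) * A := by exact_mod_cast hdk
      have hdk1 : d ∣ (k + 1) := (Nat.Coprime.dvd_of_dvd_mul_right hcop.symm hdkn)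
      obtain ⟨t, ht⟩ := hdk1
      have ht1 : 1 ≤ t := by
        rcases Nat.eq_zero_or_pos t with h | h
        · subst h; simp at ht
        · exact h
      have htZ : (k : ℤ) + 1 = (d : ℤ) * t := by exact_mod_cast ht
      have hcan : (d : ℤ) * F' = (d : ℤ) * (((t : ℤ) - 1) * A + s) := by
        linear_combination heq + (A : ℤ) * htZ
      have hF'eq : F' = ((t : ℤ) - 1) * A + s :=
        mul_left_cancel₀ (by linarith) hcan
      have hn'Z : (((t - 1) * A + s : ℕ) : ℤ) = F' := by
        rw [hF'eq]; push_cast [Nat.cast_sub ht1]; ring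
      have hn'S : (t - 1) * A + s ∈ seqSemigroup b m := by
        refine add_mem ?_ hsS
        simpa [nsmul_eq_mul] using AddSubmonoid.nsmul_mem _ hAmem (t - 1)
      exact hF3 _ hn'Z hn'S

/-- Lemma 2.2 (Kirfel–Pellikaan, Lemma 6.5), largest-gap part: for a telescopic sequence
`(a_1, …, a_m)` generating `S_m ≠ ℕ`, the largest gap of `S_m` is
`Σ_{i=1}^m (d_{i-1}/d_i - 1)·a_i` (with the `i = 1` term equal to `-a_1`). -/
theorem telescopic_largest_gap
    (m : ℕ) (hm : 1 ≤ m) (a : ℕ → ℕ)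
    (hpos : ∀ i, 1 ≤ i → i ≤ m → 0 < a i)
    (hgcd : seqGcd a m = 1)
    (htel : ∀ i, 2 ≤ i → i ≤ m → a i / seqGcd a i ∈ seqSemigroup a (i - 1))
    (hne : seqSemigroup a m ≠ ⊤) :
    ∃ l : ℕ, IsGreatest {x : ℕ | x ∉ seqSemigroup a m} l ∧
      (l : ℤ) = ∑ i ∈ Finset.Icc 1 m,
        ((seqGcd a (i - 1) : ℤ) / (seqGcd a i : ℤ) - 1) * (a i : ℤ) := by
  obtain ⟨hF1, hF2, hF3⟩ := seqF_key m hm a hpos hgcd htel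
  obtain ⟨x, hx⟩ : ∃ x : ℕ, x ∉ seqSemigroup a m := by
    by_contra h
    push_neg at h
    exact hne ((AddSubmonoid.eq_top_iff' _).2 h)
  have hxF : (x : ℤ) ≤ seqF a m := by
    by_contra h
    push_neg at h
    exact hx (hF2 x h)
  have hF0 : 0 ≤ seqF a m := le_trans (by positivity) hxF
  refine ⟨(seqF a m).toNat, ⟨?_, ?_⟩, ?_⟩
  · show (seqF a m).toNat ∉ seqSemigroup a m
    exact hF3 _ (Int.toNat_of_nonneg hF0)
  · intro y hy
    simp only [Set.mem_setOf_eq] at hy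
    by_contra h
    push_neg at h
    have : seqF a m < (y : ℤ) := by
      have := Int.toNat_of_nonneg hF0
      omega
    exact hy (hF2 y this)
  · show ((seqF a m).toNat : ℤ) = seqF a m
    exact Int.toNat_of_nonneg hF0
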